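/- arXiv:0904.1397 — 6 statements merged into one kernel-verified Lean document; each statement's English description precedes it below -/
import Mathlib

section
/- Let Γ be a topological group and μ : Γ → ℝ a homogeneous quasi-morphism with defect constant C(μ). If |μ| is bounded by K on an open neighborhood U of the identity, then for every g ∈ Γ, every p ∈ ℕ with p ≥ 1, and every h ∈ Γ with hᵖ ∈ gᵖ·U, one has |μ(h) − μ(g)| ≤ (C(μ) + K)/p. -/
/-- The key estimate in Shtern's continuity criterion. -/
theorem shtern_estimate {Γ : Type*} [Group Γ] [TopologicalSpace Γ] [IsTopologicalGroup Γ]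
    (μ : Γ → ℝ) (C K : ℝ) (hC : 0 ≤ C)
    (hquasi : ∀ x y : Γ, |μ (x * y) - μ x - μ y| ≤ C)
    (hhom : ∀ (x : Γ) (n : ℤ), μ (x ^ n) = n * μ x)
    (U : Set Γ) (hUopen : IsOpen U) (hU1 : (1 : Γ) ∈ U)
    (hK : ∀ u ∈ U, |μ u| ≤ K) :
    ∀ (g : Γ) (p : ℕ), 1 ≤ p → ∀ h : Γ, (∃ u ∈ U, h ^ p = g ^ p * u) →
      |μ h - μ g| ≤ (C + K) / p := by
  intro g p hp h ⟨u, hu, hpow⟩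
  have hpR : (0 : ℝ) < p := by exact_mod_cast hp
  have hh : μ (h ^ (p : ℤ)) = p * μ h := by rw [hhom]; push_cast; ring
  have hg : μ (g ^ (p : ℤ)) = p * μ g := by rw [hhom]; push_cast; ring
  have hzp : (h : Γ) ^ (p : ℤ) = g ^ (p : ℤ) * u := by
    simpa [zpow_natCast] using hpow
  have hq := hquasi (g ^ (p : ℤ)) u
  rw [← hzp, hh, hg] at hq
  have hKu := hK u hu
  have key : |p * μ h - p * μ g| ≤ C + K := by
    have := abs_sub_abs_le_abs_sub (p * μ h - p * μ g - μ u) (- μ u)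
    calc |p * μ h - p * μ g| = |(p * μ h - p * μ g - μ u) + μ u| := by ring_nf
      _ ≤ |p * μ h - p * μ g - μ u| + |μ u| := abs_add_le _ _
      _ ≤ C + K := add_le_add hq hKu
  rw [le_div_iff₀ hpR]
  calc |μ h - μ g| * p = |p * μ h - p * μ g| := by
        rw [show (p:ℝ) * μ h - p * μ g = (μ h - μ g) * p by ring, abs_mul, abs_of_pos hpR]
    _ ≤ C + K := key
end

section
/- (Shtern) Let Γ be a topological group and μ : Γ → ℝ a homogeneous quasi-morphism. Then μ is continuous if and only if μ is bounded on some neighborhood of the identity. -/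
open Filter Topology Pointwise

/-- For every `n`, every neighborhood of `1` contains all products of `n`
elements of some smaller neighborhood of `1`. -/
lemma shtern_prod_nhds {Γ : Type*} [Group Γ] [TopologicalSpace Γ]
    [IsTopologicalGroup Γ] :
    ∀ (n : ℕ) (U : Set Γ), U ∈ 𝓝 (1 : Γ) →
      ∃ V ∈ 𝓝 (1 : Γ), ∀ l : List Γ, l.length = n → (∀ x ∈ l, x ∈ V) →
        l.prod ∈ U := by
  intro n
  induction n with
  | zero =>
    intro U hU
    refine ⟨U, hU, ?_⟩
    intro l hl _
    rw [List.length_eq_zero_iff] at hl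
    simpa [hl] using mem_of_mem_nhds hU
  | succ n ih =>
    intro U hU
    obtain ⟨V₂, hV₂open, hV₂1, hV₂mul⟩ := exists_open_nhds_one_mul_subset hU
    have hV₂ : V₂ ∈ 𝓝 (1 : Γ) := hV₂open.mem_nhds hV₂1
    obtain ⟨V, hV, hVprod⟩ := ih V₂ hV₂
    refine ⟨V ∩ V₂, Filter.inter_mem hV hV₂, ?_⟩
    intro l hl hmem
    match l with
    | a :: t =>
      simp only [List.length_cons, Nat.succ.injEq] at hl
      have ha : a ∈ V₂ := (hmem a (by simp)).2
      have ht : t.prod ∈ V₂ := hVprod t hl (fun x hx => (hmem x (by simp [hx])).1)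
      have : a * t.prod ∈ V₂ * V₂ := Set.mul_mem_mul ha ht
      simpa using hV₂mul this

/-- The conjugation expansion `(x*v)^n = x^n * ∏ conjugates of v`. -/
lemma shtern_pow_expansion {Γ : Type*} [Group Γ] (x v : Γ) :
    ∀ n : ℕ, (x * v) ^ n =
      x ^ n * (((List.range n).reverse).map
        (fun k : ℕ => x ^ (-(k : ℤ)) * v * x ^ (k : ℤ))).prod := by
  intro n
  induction n with
  | zero => simp
  | succ n ih =>
    have hrange : (List.range (n + 1)).reverse = n :: (List.range n).reverse := by
      rw [List.range_succ, List.reverse_append]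
      simp
    rw [hrange, List.map_cons, List.prod_cons, pow_succ' (x * v), ih]
    have hx : x ^ (n + 1) = x ^ ((n : ℤ) + 1) := by
      rw [← zpow_natCast]; push_cast; ring_nf
    rw [hx, ← mul_assoc, ← mul_assoc, ← mul_assoc]
    congr 2
    rw [← mul_assoc, (by rw [← zpow_add]; simp :
      x ^ ((n : ℤ) + 1) * x ^ (-(n : ℤ)) = x)]
    exact (zpow_natCast x n).symm

/-- (Shtern) A homogeneous quasi-morphism on a topological group is continuous
iff it is bounded on some neighborhood of the identity. -/
theorem shtern_continuity_criterion {Γ : Type*} [Group Γ] [TopologicalSpace Γ]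
    [IsTopologicalGroup Γ] (μ : Γ → ℝ) (C : ℝ) (hC : 0 ≤ C)
    (hquasi : ∀ x y : Γ, |μ (x * y) - μ x - μ y| ≤ C)
    (hhom : ∀ (x : Γ) (n : ℤ), μ (x ^ n) = n * μ x) :
    Continuous μ ↔ ∃ U ∈ nhds (1 : Γ), ∃ K : ℝ, ∀ x ∈ U, |μ x| ≤ K := by
  have hμ1 : μ 1 = 0 := by simpa using hhom 1 0
  constructor
  · intro hcont
    refine ⟨μ ⁻¹' Set.Ioo (-1) 1, ?_, 1, ?_⟩
    · exact (isOpen_Ioo.preimage hcont).mem_nhds (by simp [hμ1])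
    · intro x hx
      exact abs_le.mpr ⟨le_of_lt hx.1, le_of_lt hx.2⟩
  · rintro ⟨U, hU, K, hK⟩
    have hK0 : 0 ≤ K := le_trans (abs_nonneg _) (hK 1 (mem_of_mem_nhds hU))
    rw [continuous_iff_continuousAt]
    intro x
    rw [ContinuousAt, Metric.tendsto_nhds]
    intro ε hε
    obtain ⟨n, hn⟩ := exists_nat_gt ((K + C) / ε)
    have hn0 : (0 : ℝ) < n :=
      lt_of_le_of_lt (div_nonneg (by linarith) hε.le) hn
    have hKC : K + C < ε * n := by
      rw [div_lt_iff₀ hε] at hn; linarith [hn]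
    obtain ⟨V, hV, hVprod⟩ := shtern_prod_nhds n U hU
    have hWk : ∀ k : ℕ,
        (fun w => x ^ (-(k : ℤ)) * w * x ^ (k : ℤ)) ⁻¹' V ∈ 𝓝 (1 : Γ) := by
      intro k
      apply ContinuousAt.preimage_mem_nhds
      · fun_prop
      · simpa using hV
    have hW : (⋂ k ∈ Finset.range n,
        (fun w => x ^ (-(k : ℤ)) * w * x ^ (k : ℤ)) ⁻¹' V) ∈ 𝓝 (1 : Γ) :=
      (Filter.biInter_finset_mem _).mpr fun k _ => hWk k
    rw [← map_mul_left_nhds_one, Filter.eventually_map]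
    filter_upwards [hW] with v hv
    set L : List Γ := ((List.range n).reverse).map
      (fun k : ℕ => x ^ (-(k : ℤ)) * v * x ^ (k : ℤ)) with hL
    have hLmem : ∀ y ∈ L, y ∈ V := by
      intro y hy
      rw [hL, List.mem_map] at hy
      obtain ⟨k, hk, rfl⟩ := hy
      rw [List.mem_reverse, List.mem_range] at hk
      exact Set.mem_iInter₂.mp hv k (Finset.mem_range.mpr hk)
    have hLlen : L.length = n := by simp [hL]
    have hLU : L.prod ∈ U := hVprod L hLlen hLmem
    have hμL : |μ L.prod| ≤ K := hK _ hLU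
    have hexp : (x * v) ^ n = x ^ n * L.prod := shtern_pow_expansion x v n
    have h1 : μ ((x * v) ^ n) = (n : ℝ) * μ (x * v) := by
      rw [← zpow_natCast (x * v) n, hhom]; push_cast; ring
    have h2 : μ (x ^ n) = (n : ℝ) * μ x := by
      rw [← zpow_natCast x n, hhom]; push_cast; ring
    have h3 : |μ (x ^ n * L.prod) - μ (x ^ n) - μ L.prod| ≤ C := hquasi _ _
    rw [← hexp, h1, h2] at h3
    have h4 : |(n : ℝ) * μ (x * v) - (n : ℝ) * μ x| ≤ K + C := by
      have e : (n : ℝ) * μ (x * v) - (n : ℝ) * μ x =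
          ((n : ℝ) * μ (x * v) - (n : ℝ) * μ x - μ L.prod) + μ L.prod := by ring
      rw [e]
      exact le_trans (abs_add_le _ _) (by linarith)
    have h5 : |μ (x * v) - μ x| < ε := by
      have hmul : (n : ℝ) * |μ (x * v) - μ x| ≤ K + C := by
        rwa [← abs_of_pos hn0, ← abs_mul, mul_sub]
      nlinarith [abs_nonneg (μ (x * v) - μ x)]
    rw [Real.dist_eq]
    exact h5
end

section
/- Let Γ be a topological group, μ : Γ → ℝ a homogeneous quasi-morphism bounded by K on an open neighborhood U of the identity, and suppose additionally that for each g ∈ Γ and each p ≥ 1 the set V_p(g) = { h ∈ Γ : hᵖ ∈ gᵖ U } is a neighborhood of g. Then μ is continuous at every point of Γ. -/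
/-- A homogeneous quasi-morphism bounded near the identity, for which each set
`V_p(g)` is a neighborhood of `g`, is continuous everywhere. -/
theorem shtern_continuity {Γ : Type*} [Group Γ] [TopologicalSpace Γ] [IsTopologicalGroup Γ]
    (μ : Γ → ℝ) (C K : ℝ) (hC : 0 ≤ C)
    (hquasi : ∀ x y : Γ, |μ (x * y) - μ x - μ y| ≤ C)
    (hhom : ∀ (x : Γ) (n : ℤ), μ (x ^ n) = n * μ x)
    (U : Set Γ) (hUopen : IsOpen U) (hU1 : (1 : Γ) ∈ U)
    (hK : ∀ u ∈ U, |μ u| ≤ K)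
    (hV : ∀ (g : Γ) (p : ℕ), 1 ≤ p →
      {h : Γ | ∃ u ∈ U, h ^ p = g ^ p * u} ∈ nhds g) :
    Continuous μ := by
  have hK0 : 0 ≤ K := le_trans (abs_nonneg _) (hK 1 hU1)
  rw [continuous_iff_continuousAt]
  intro g
  rw [ContinuousAt, Metric.tendsto_nhds]
  intro ε hε
  obtain ⟨p, hp⟩ : ∃ p : ℕ, (C + K) / ε < p := exists_nat_gt _
  have hp1 : 1 ≤ p + 1 := Nat.le_add_left 1 p
  have hppos : (0 : ℝ) < (p + 1 : ℕ) := by positivity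
  filter_upwards [hV g (p + 1) hp1] with h hh
  obtain ⟨u, hu, hhu⟩ := hh
  have h1 : μ (h ^ (p + 1)) = (p + 1 : ℕ) * μ h := by
    have := hhom h (p + 1 : ℕ)
    rwa [zpow_natCast, Int.cast_natCast] at this
  have h2 : μ (g ^ (p + 1)) = (p + 1 : ℕ) * μ g := by
    have := hhom g (p + 1 : ℕ)
    rwa [zpow_natCast, Int.cast_natCast] at this
  have key : |(p + 1 : ℕ) * μ h - (p + 1 : ℕ) * μ g| ≤ C + K := by
    have := hquasi (g ^ (p + 1)) u
    rw [← hhu, h1, h2] at this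
    calc |(p + 1 : ℕ) * μ h - (p + 1 : ℕ) * μ g|
        = |((p + 1 : ℕ) * μ h - (p + 1 : ℕ) * μ g - μ u) + μ u| := by ring_nf
      _ ≤ |(p + 1 : ℕ) * μ h - (p + 1 : ℕ) * μ g - μ u| + |μ u| := abs_add_le _ _
      _ ≤ C + K := add_le_add this (hK u hu)
  rw [Real.dist_eq]
  have hmul : |μ h - μ g| ≤ (C + K) / (p + 1 : ℕ) := by
    rw [le_div_iff₀ hppos]
    calc |μ h - μ g| * (p + 1 : ℕ) = |(p + 1 : ℕ) * μ h - (p + 1 : ℕ) * μ g| := by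
          rw [← mul_sub, abs_mul, abs_of_pos hppos]; ring
      _ ≤ C + K := key
  refine lt_of_le_of_lt hmul ?_
  rw [div_lt_iff₀ hppos]
  have : (C + K) / ε < (p + 1 : ℕ) := lt_of_lt_of_le hp (by exact_mod_cast Nat.le_succ p)
  have h3 := (div_lt_iff₀ hε).mp this
  linarith [mul_comm ε ((p + 1 : ℕ) : ℝ)]
end

section
/- Let Λ be a topological group, Γ ⊆ Λ a dense subgroup, and μ : Γ → ℝ a continuous homogeneous quasi-morphism. Then there exists a continuous homogeneous quasi-morphism μ' : Λ → ℝ extending μ, i.e., μ'(g) = μ(g) for all g ∈ Γ. -/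
open Filter Topology

/-- A continuous homogeneous quasi-morphism on a dense subgroup extends to a
continuous homogeneous quasi-morphism on the whole topological group. -/
theorem extend_continuous_qm {Λ : Type*} [Group Λ] [TopologicalSpace Λ] [IsTopologicalGroup Λ]
    (Γ : Subgroup Λ) (hdense : Dense (Γ : Set Λ))
    (μ : Γ → ℝ) (C : ℝ) (hC : 0 ≤ C)
    (hquasi : ∀ x y : Γ, |μ (x * y) - μ x - μ y| ≤ C)
    (hhom : ∀ (x : Γ) (n : ℤ), μ (x ^ n) = n * μ x)
    (hcont : Continuous μ) :
    ∃ (μ' : Λ → ℝ) (C' : ℝ), 0 ≤ C' ∧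
      (∀ x y : Λ, |μ' (x * y) - μ' x - μ' y| ≤ C') ∧
      (∀ (x : Λ) (n : ℤ), μ' (x ^ n) = n * μ' x) ∧
      Continuous μ' ∧
      (∀ g : Γ, μ' (g : Λ) = μ g) := by
  have hμ1 : μ 1 = 0 := by simpa using hhom 1 0
  -- the inclusion is a dense inducing
  have drange : DenseRange ((↑) : Γ → Λ) := by
    rwa [DenseRange, Subtype.range_coe]
  have di : IsDenseInducing ((↑) : Γ → Λ) := ⟨IsInducing.subtypeVal, drange⟩
  -- key: μ has a limit along the comap filter at every point of Λ
  have key : ∀ g : Λ, ∃ c : ℝ, Tendsto μ (comap ((↑) : Γ → Λ) (𝓝 g)) (𝓝 c) := by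
    intro g
    have hne : NeBot (comap ((↑) : Γ → Λ) (𝓝 g)) := di.comap_nhds_neBot g
    have hcauchy : Cauchy (map μ (comap ((↑) : Γ → Λ) (𝓝 g))) := by
      rw [Metric.cauchy_iff]
      refine ⟨hne.map μ, ?_⟩
      intro ε hε
      -- choose n large
      obtain ⟨n, hn⟩ := exists_nat_gt ((C + 1) / ε)
      have hnpos : 0 < (n : ℝ) :=
        lt_of_le_of_lt (div_nonneg (by linarith) hε.le) hn
      -- neighborhood of 1 in Γ where |μ| ≤ 1
      have h1 : {γ : Γ | |μ γ| < 1} ∈ 𝓝 (1 : Γ) := by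
        have := hcont.continuousAt (x := (1 : Γ)) (Metric.ball_mem_nhds (μ 1) one_pos)
        refine Filter.mem_of_superset this ?_
        intro γ hγ
        simp only [Set.mem_preimage, Metric.mem_ball, Real.dist_eq, hμ1, sub_zero] at hγ
        exact hγ
      rw [nhds_induced, Filter.mem_comap] at h1
      obtain ⟨U, hU, hUsub⟩ := h1
      -- neighborhood V of g with a^n (b^n)⁻¹ ∈ U for a b ∈ V
      have hψ : Continuous (fun p : Λ × Λ => p.1 ^ n * (p.2 ^ n)⁻¹) := by
        fun_prop
      have hpre : (fun p : Λ × Λ => p.1 ^ n * (p.2 ^ n)⁻¹) ⁻¹' U ∈ 𝓝 ((g, g) : Λ × Λ) := by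
        apply hψ.continuousAt.preimage_mem_nhds
        simpa using hU
      rw [nhds_prod_eq, Filter.mem_prod_iff] at hpre
      obtain ⟨V₁, hV₁, V₂, hV₂, hVsub⟩ := hpre
      refine ⟨μ '' (((↑) : Γ → Λ) ⁻¹' (V₁ ∩ V₂)), ?_, ?_⟩
      · exact Filter.image_mem_map (Filter.preimage_mem_comap (inter_mem hV₁ hV₂))
      · rintro x ⟨γ₁, hγ₁, rfl⟩ y ⟨γ₂, hγ₂, rfl⟩
        -- the element a = γ₁^n (γ₂^n)⁻¹ is in U, hence |μ a| < 1
        set a : Γ := γ₁ ^ n * (γ₂ ^ n)⁻¹ with ha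
        have haU : (a : Λ) ∈ U := by
          have := hVsub (Set.mk_mem_prod hγ₁.1 hγ₂.2)
          simpa [ha] using this
        have haμ : |μ a| < 1 := hUsub haU
        have hq := hquasi a (γ₂ ^ n)
        have hprod : a * γ₂ ^ n = γ₁ ^ n := by
          rw [ha]; group
        rw [hprod] at hq
        have hz1 : μ (γ₁ ^ n) = (n : ℝ) * μ γ₁ := by
          have := hhom γ₁ (n : ℤ)
          rwa [zpow_natCast, Int.cast_natCast] at this
        have hz2 : μ (γ₂ ^ n) = (n : ℝ) * μ γ₂ := by
          have := hhom γ₂ (n : ℤ)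
          rwa [zpow_natCast, Int.cast_natCast] at this
        rw [hz1, hz2] at hq
        have hdiff : |(n : ℝ) * μ γ₁ - (n : ℝ) * μ γ₂| ≤ C + 1 := by
          have : (n : ℝ) * μ γ₁ - (n : ℝ) * μ γ₂ =
              ((n : ℝ) * μ γ₁ - μ a - (n : ℝ) * μ γ₂) + μ a := by ring
          rw [this]
          calc |((n : ℝ) * μ γ₁ - μ a - (n : ℝ) * μ γ₂) + μ a|
              ≤ |(n : ℝ) * μ γ₁ - μ a - (n : ℝ) * μ γ₂| + |μ a| := abs_add_le _ _
            _ ≤ C + 1 := add_le_add hq haμ.le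
        rw [Real.dist_eq]
        have : (n : ℝ) * |μ γ₁ - μ γ₂| ≤ C + 1 := by
          rwa [← abs_of_pos hnpos, ← abs_mul, mul_sub]
        have h2 : |μ γ₁ - μ γ₂| ≤ (C + 1) / n := (le_div_iff₀ hnpos).2 (by linarith)
        have h3 : C + 1 < n * ε := (div_lt_iff₀ hε).1 hn
        calc |μ γ₁ - μ γ₂| ≤ (C + 1) / n := h2
          _ < ε := by
            rw [div_lt_iff₀ hnpos]
            linarith [h3, mul_comm (n : ℝ) ε]
    obtain ⟨c, hc⟩ := CompleteSpace.complete hcauchy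
    exact ⟨c, le_trans (map_mono le_rfl) hc⟩
  -- the extension
  set μ' : Λ → ℝ := di.extend μ with hμ'
  have ht : ∀ g : Λ, Tendsto μ (comap ((↑) : Γ → Λ) (𝓝 g)) (𝓝 (μ' g)) := by
    intro g
    obtain ⟨c, hc⟩ := key g
    rwa [hμ', di.extend_eq_of_tendsto hc]
  have hne : ∀ g : Λ, NeBot (comap ((↑) : Γ → Λ) (𝓝 g)) := fun g => di.comap_nhds_neBot g
  refine ⟨μ', C, hC, ?_, ?_, di.continuous_extend key, fun γ => di.extend_eq hcont γ⟩
  · -- quasimorphism bound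
    intro x y
    set F := comap ((↑) : Γ → Λ) (𝓝 x) ×ˢ comap ((↑) : Γ → Λ) (𝓝 y) with hF
    haveI : NeBot F := (hne x).prod (hne y)
    have t1 : Tendsto (fun p : Γ × Γ => μ (p.1 * p.2)) F (𝓝 (μ' (x * y))) := by
      refine (ht (x * y)).comp ?_
      rw [tendsto_comap_iff]
      have : Tendsto (fun p : Γ × Γ => ((p.1 : Λ), (p.2 : Λ))) F (𝓝 (x, y)) := by
        rw [nhds_prod_eq]
        exact (tendsto_comap.comp tendsto_fst).prodMk (tendsto_comap.comp tendsto_snd)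
      have := (continuous_mul (M := Λ)).continuousAt.tendsto.comp
        (show Tendsto (fun p : Γ × Γ => ((p.1 : Λ), (p.2 : Λ))) F (𝓝 (x, y)) from this)
      simpa [Function.comp_def] using this
    have t2 : Tendsto (fun p : Γ × Γ => μ p.1) F (𝓝 (μ' x)) :=
      (ht x).comp (tendsto_comap_iff.2 (tendsto_comap.comp tendsto_fst))
    have t3 : Tendsto (fun p : Γ × Γ => μ p.2) F (𝓝 (μ' y)) :=
      (ht y).comp (tendsto_comap_iff.2 (tendsto_comap.comp tendsto_snd))
    have tall : Tendsto (fun p : Γ × Γ => |μ (p.1 * p.2) - μ p.1 - μ p.2|) F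
        (𝓝 (|μ' (x * y) - μ' x - μ' y|)) := ((t1.sub t2).sub t3).abs
    exact le_of_tendsto tall (Eventually.of_forall fun p => hquasi p.1 p.2)
  · -- homogeneity
    intro g n
    have t1 : Tendsto (fun γ : Γ => μ (γ ^ n)) (comap ((↑) : Γ → Λ) (𝓝 g))
        (𝓝 (μ' (g ^ n))) := by
      refine (ht (g ^ n)).comp ?_
      rw [tendsto_comap_iff]
      have : Tendsto (fun γ : Γ => (γ : Λ) ^ n) (comap ((↑) : Γ → Λ) (𝓝 g)) (𝓝 (g ^ n)) :=
        ((continuous_zpow n).continuousAt.tendsto).comp tendsto_comap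
      simpa [Function.comp_def] using this
    have t2 : Tendsto (fun γ : Γ => μ (γ ^ n)) (comap ((↑) : Γ → Λ) (𝓝 g))
        (𝓝 ((n : ℝ) * μ' g)) := by
      have : (fun γ : Γ => μ (γ ^ n)) = fun γ : Γ => (n : ℝ) * μ γ := by
        funext γ; exact hhom γ n
      rw [this]
      exact (ht g).const_mul _
    haveI := hne g
    exact tendsto_nhds_unique t1 t2
end

section
/- Let Λ be a topological group, Γ ⊆ Λ a dense subgroup, μ : Γ → ℝ a homogeneous quasi-morphism bounded by C on U = U' ∩ Γ for some open U' ⊆ Λ containing 1, and let O be a symmetric open neighborhood of 1 in Λ with O·O ⊆ U'. Fix g ∈ Λ and a sequence (h_k) in Γ with h_k ∈ V_1(g) ∩ … ∩ V_k(g), where V_p(g) = { h ∈ Λ : hᵖ ∈ gᵖ O }. Then for all k₁, k₂ ≥ p ≥ 1, |μ(h_{k₁}) − μ(h_{k₂})| ≤ (C + C(μ))/p; in particular (μ(h_k)) is a Cauchy sequence in ℝ. -/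
open scoped Pointwise

/-- The Cauchy estimate in the extension of a continuous homogeneous
quasi-morphism from a dense subgroup. -/
theorem extension_cauchy_estimate {Λ : Type*} [Group Λ] [TopologicalSpace Λ]
    [IsTopologicalGroup Λ] (Γ : Subgroup Λ) (hdense : Dense (Γ : Set Λ))
    (μ : Γ → ℝ) (C Cμ : ℝ) (hC : 0 ≤ C) (hCμ : 0 ≤ Cμ)
    (hquasi : ∀ x y : Γ, |μ (x * y) - μ x - μ y| ≤ Cμ)
    (hhom : ∀ (x : Γ) (n : ℤ), μ (x ^ n) = n * μ x)
    (U' : Set Λ) (hU'open : IsOpen U') (hU'1 : (1 : Λ) ∈ U')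
    (hbound : ∀ x : Γ, (x : Λ) ∈ U' → |μ x| ≤ C)
    (O : Set Λ) (hOopen : IsOpen O) (hO1 : (1 : Λ) ∈ O) (hOsymm : O⁻¹ = O)
    (hOO : O * O ⊆ U')
    (g : Λ) (h : ℕ → Γ)
    (hh : ∀ k p : ℕ, 1 ≤ p → p ≤ k → ∃ o ∈ O, ((h k : Λ)) ^ p = g ^ p * o) :
    (∀ p k₁ k₂ : ℕ, 1 ≤ p → p ≤ k₁ → p ≤ k₂ →
        |μ (h k₁) - μ (h k₂)| ≤ (C + Cμ) / p) ∧
      CauchySeq (fun k => μ (h k)) := by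
  have key : ∀ p k₁ k₂ : ℕ, 1 ≤ p → p ≤ k₁ → p ≤ k₂ →
      |μ (h k₁) - μ (h k₂)| ≤ (C + Cμ) / p := by
    intro p k₁ k₂ hp h1 h2
    obtain ⟨o₁, ho₁, he₁⟩ := hh k₁ p hp h1
    obtain ⟨o₂, ho₂, he₂⟩ := hh k₂ p hp h2
    set x : Γ := ((h k₂) ^ p)⁻¹ * (h k₁) ^ p with hx
    have hxcoe : (x : Λ) = o₂⁻¹ * o₁ := by
      push_cast [hx]
      rw [he₁, he₂, mul_inv_rev]
      group
    have hxU : (x : Λ) ∈ U' := by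
      apply hOO
      rw [hxcoe]
      exact Set.mul_mem_mul (by rw [← hOsymm]; exact Set.inv_mem_inv.mpr ho₂) ho₁
    have hb : |μ x| ≤ C := hbound x hxU
    have hq : |μ x - μ (((h k₂) ^ p)⁻¹) - μ ((h k₁) ^ p)| ≤ Cμ :=
      hquasi _ _
    have e1 : μ (((h k₂) ^ p)⁻¹) = -(p : ℝ) * μ (h k₂) := by
      have := hhom (h k₂) (-(p : ℤ))
      rw [zpow_neg, zpow_natCast] at this
      rw [this]; push_cast; ring
    have e2 : μ ((h k₁) ^ p) = (p : ℝ) * μ (h k₁) := by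
      have := hhom (h k₁) (p : ℤ)
      rw [zpow_natCast] at this
      rw [this]; push_cast; ring
    rw [e1, e2] at hq
    have hp0 : (0 : ℝ) < p := by exact_mod_cast hp
    rw [le_div_iff₀ hp0]
    have habs : |μ (h k₁) - μ (h k₂)| * (p : ℝ) = |(p : ℝ) * μ (h k₁) - (p : ℝ) * μ (h k₂)| := by
      rw [eq_comm, show (p : ℝ) * μ (h k₁) - (p : ℝ) * μ (h k₂)
        = (μ (h k₁) - μ (h k₂)) * p by ring, abs_mul, abs_of_pos hp0]
    rw [habs]
    calc |(p : ℝ) * μ (h k₁) - (p : ℝ) * μ (h k₂)|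
        = |μ x - (μ x - (-(p : ℝ) * μ (h k₂)) - (p : ℝ) * μ (h k₁))| := by ring_nf
      _ ≤ |μ x| + |μ x - (-(p : ℝ) * μ (h k₂)) - (p : ℝ) * μ (h k₁)| := abs_sub _ _
      _ ≤ C + Cμ := add_le_add hb hq
  refine ⟨key, ?_⟩
  rw [Metric.cauchySeq_iff']
  intro ε hε
  obtain ⟨N, hN⟩ := exists_nat_gt ((C + Cμ) / ε)
  refine ⟨N + 1, fun n hn => ?_⟩
  have hN1 : (0 : ℝ) < (N : ℝ) + 1 := by positivity
  have hlt : (C + Cμ) / ((N : ℕ) + 1 : ℝ) < ε := by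
    rw [div_lt_iff₀ hN1]
    have : (C + Cμ) / ε < (N : ℝ) + 1 := lt_of_le_of_lt (le_of_lt hN) (by linarith)
    calc C + Cμ = ((C + Cμ) / ε) * ε := by field_simp
      _ < ((N : ℝ) + 1) * ε := by exact mul_lt_mul_of_pos_right this hε
      _ = ε * ((N : ℝ) + 1) := by ring
  have := key (N + 1) n (N + 1) (by omega) hn le_rfl
  rw [Real.dist_eq]
  push_cast at this ⊢
  linarith
end

section
/- Let Γ be a topological group, μ : Γ → ℝ a homogeneous quasi-morphism, and suppose there exist a neighborhood 𝒰 of the identity and an integer N ≥ 1 together with a family of subgroups (H_j) such that μ vanishes on each H_j, and every g ∈ 𝒰 can be written as a product of at most N elements each lying in some H_j. Then μ is bounded by (N−1)·C(μ) on 𝒰, and hence μ is continuous. -/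
/-- Bounded fragmentation near the identity into subgroups on which a
homogeneous quasi-morphism vanishes yields boundedness near the identity and
hence continuity. -/
theorem qm_continuous_of_fragmentation {Γ : Type*} [Group Γ] [TopologicalSpace Γ]
    [IsTopologicalGroup Γ] {ι : Type*} (μ : Γ → ℝ) (C : ℝ) (hC : 0 ≤ C)
    (hquasi : ∀ x y : Γ, |μ (x * y) - μ x - μ y| ≤ C)
    (hhom : ∀ (x : Γ) (n : ℤ), μ (x ^ n) = n * μ x)
    (U : Set Γ) (hU : U ∈ nhds (1 : Γ)) (N : ℕ) (hN : 1 ≤ N)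
    (H : ι → Subgroup Γ) (hvanish : ∀ j, ∀ x ∈ H j, μ x = 0)
    (hfrag : ∀ g ∈ U, ∃ l : List Γ, l.length ≤ N ∧
      (∀ x ∈ l, ∃ j, x ∈ H j) ∧ l.prod = g) :
    (∀ g ∈ U, |μ g| ≤ ((N : ℝ) - 1) * C) ∧ Continuous μ := by
  have hμ1 : μ 1 = 0 := by simpa using hhom 1 0
  -- key list lemma
  have key : ∀ (l : List Γ) (x : Γ), μ x = 0 → (∀ y ∈ l, μ y = 0) →
      |μ ((x :: l).prod)| ≤ (l.length : ℝ) * C := by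
    intro l
    induction l with
    | nil => intro x hx _; simp [hx]
    | cons y t ih =>
      intro x hx hmem
      have h2 := ih y (hmem y (by simp)) (fun z hz => hmem z (by simp [hz]))
      have h1 := hquasi x ((y :: t).prod)
      simp only [List.prod_cons] at h1 h2 ⊢
      rw [abs_le] at h1 h2 ⊢
      push_cast [List.length_cons]
      rw [hx] at h1
      constructor <;> linarith [h1.1, h1.2, h2.1, h2.2]
  -- boundedness on U
  have hbound : ∀ g ∈ U, |μ g| ≤ ((N : ℝ) - 1) * C := by
    intro g hg
    obtain ⟨l, hlen, hmem, hprod⟩ := hfrag g hg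
    have hzero : ∀ y ∈ l, μ y = 0 := by
      intro y hy; obtain ⟨j, hj⟩ := hmem y hy; exact hvanish j y hj
    have hNC : 0 ≤ ((N : ℝ) - 1) * C := by
      have : (1 : ℝ) ≤ (N : ℝ) := by exact_mod_cast hN
      nlinarith
    cases l with
    | nil => simp [← hprod, hμ1]; exact hNC
    | cons x t =>
      have := key t x (hzero x (by simp)) (fun y hy => hzero y (by simp [hy]))
      rw [hprod] at this
      have hlt : (t.length : ℝ) ≤ (N : ℝ) - 1 := by
        have : t.length + 1 ≤ N := by simpa using hlen
        have := (Nat.cast_le (α := ℝ)).2 this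
        push_cast at this; linarith
      calc |μ g| ≤ (t.length : ℝ) * C := this
        _ ≤ ((N : ℝ) - 1) * C := by nlinarith
  refine ⟨hbound, ?_⟩
  -- continuity
  set B := ((N : ℝ) - 1) * C with hBdef
  have hB : 0 ≤ B := by
    have : (1 : ℝ) ≤ (N : ℝ) := by exact_mod_cast hN
    nlinarith
  rw [continuous_iff_continuousAt]
  intro g
  rw [ContinuousAt, Metric.tendsto_nhds]
  intro ε hε
  obtain ⟨n, hn⟩ := exists_nat_gt ((C + B) / ε)
  have hn0 : 0 < (n : ℝ) := by
    have : 0 ≤ (C + B) / ε := div_nonneg (by linarith) hε.le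
    linarith
  have hCB : C + B < n * ε := by
    rw [div_lt_iff₀ hε] at hn; linarith
  have hcont : ContinuousAt (fun x : Γ => x ^ n * (g ^ n)⁻¹) g := by fun_prop
  have hval : (fun x : Γ => x ^ n * (g ^ n)⁻¹) g = 1 := by group
  have hev : ∀ᶠ x in nhds g, x ^ n * (g ^ n)⁻¹ ∈ U := hcont (hval ▸ hU)
  filter_upwards [hev] with x hx
  have hw : |μ (x ^ n * (g ^ n)⁻¹)| ≤ B := hbound _ hx
  have hxn : μ (x ^ n) = (n : ℝ) * μ x := by
    have := hhom x (n : ℤ); push_cast at this; simpa [zpow_natCast] using this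
  have hgn : μ (g ^ n) = (n : ℝ) * μ g := by
    have := hhom g (n : ℤ); push_cast at this; simpa [zpow_natCast] using this
  have hq := hquasi (x ^ n * (g ^ n)⁻¹) (g ^ n)
  rw [inv_mul_cancel_right] at hq
  have hdiff : |(n : ℝ) * μ x - (n : ℝ) * μ g| ≤ C + B := by
    have h1 : |μ (x ^ n) - μ (g ^ n)| ≤ C + |μ (x ^ n * (g ^ n)⁻¹)| := by
      calc |μ (x ^ n) - μ (g ^ n)|
          = |(μ (x ^ n) - μ (x ^ n * (g ^ n)⁻¹) - μ (g ^ n)) + μ (x ^ n * (g ^ n)⁻¹)| := by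
            ring_nf
        _ ≤ |μ (x ^ n) - μ (x ^ n * (g ^ n)⁻¹) - μ (g ^ n)| + |μ (x ^ n * (g ^ n)⁻¹)| :=
            abs_add_le _ _
        _ ≤ C + |μ (x ^ n * (g ^ n)⁻¹)| := by linarith
    rw [hxn, hgn] at h1
    linarith
  rw [Real.dist_eq]
  have : (n : ℝ) * |μ x - μ g| ≤ C + B := by
    rw [← abs_of_pos hn0, ← abs_mul]
    rw [mul_sub]; exact hdiff
  calc |μ x - μ g| = ((n : ℝ) * |μ x - μ g|) / n := by field_simp
    _ ≤ (C + B) / n := by gcongr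
    _ < ε := by rw [div_lt_iff₀ hn0]; nlinarith
end
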